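/- arXiv:2301.01053 — 7 statements merged into one kernel-verified Lean document; each statement's English description precedes it below -/
import Mathlib

section
/- The function f(x) = x(1 - ln x)^2 is concave on the interval [0,1] (with f(0) := 0). -/
open Real Filter Set Topology

lemma tendsto_f_zero :
    Tendsto (fun x : ℝ => x * (1 - Real.log x) ^ 2) (𝓝[>] (0:ℝ)) (𝓝 0) := by
  have h1 : Tendsto (fun x : ℝ => Real.log x * x) (𝓝[>] (0:ℝ)) (𝓝 0) := by
    simpa only [Real.rpow_one] using tendsto_log_mul_rpow_nhdsGT_zero zero_lt_one
  have h2 : Tendsto (fun x : ℝ => Real.log x * x ^ ((1:ℝ)/2)) (𝓝[>] (0:ℝ)) (𝓝 0) :=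
    tendsto_log_mul_rpow_nhdsGT_zero (by norm_num)
  have h3 : Tendsto (fun x : ℝ => (Real.log x * x ^ ((1:ℝ)/2))^2) (𝓝[>] (0:ℝ)) (𝓝 0) := by
    simpa using h2.pow 2
  have h4 : Tendsto (fun x : ℝ => x) (𝓝[>] (0:ℝ)) (𝓝 0) :=
    tendsto_id.mono_left nhdsWithin_le_nhds
  have := (h4.sub (h1.const_mul 2)).add h3
  rw [show ((0:ℝ) - 2*0 + 0) = 0 by ring] at this
  refine this.congr' ?_
  filter_upwards [self_mem_nhdsWithin] with x (hx : 0 < x)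
  have hx2 : (x ^ ((1:ℝ)/2))^2 = x := by
    rw [← Real.rpow_natCast (x ^ ((1:ℝ)/2)) 2, ← Real.rpow_mul hx.le]
    norm_num
  rw [mul_pow, hx2]
  ring

/-- The function `f(x) = x (1 - ln x)^2` (with `f 0 = 0`, which holds since
`Real.log 0 = 0`) is concave on the interval `[0,1]`. -/
theorem concaveOn_x_one_sub_log_sq :
    ConcaveOn ℝ (Set.Icc (0:ℝ) 1) (fun x : ℝ => x * (1 - Real.log x) ^ 2) := by
  have hint : interior (Set.Icc (0:ℝ) 1) = Set.Ioo 0 1 := interior_Icc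
  refine concaveOn_of_hasDerivWithinAt2_nonpos (f' := fun x => Real.log x ^ 2 - 1)
    (f'' := fun x => 2 * Real.log x / x) (convex_Icc 0 1) ?_ ?_ ?_ ?_
  · -- continuity
    intro x hx
    rcases eq_or_lt_of_le hx.1 with h0 | h0
    · -- x = 0
      subst h0
      have hf0 : (fun x : ℝ => x * (1 - Real.log x) ^ 2) 0 = 0 := by simp
      unfold ContinuousWithinAt
      rw [hf0]
      have hsub : Set.Icc (0:ℝ) 1 ⊆ {0} ∪ Set.Ioi 0 := by
        intro y hy
        rcases eq_or_lt_of_le hy.1 with h | h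
        · exact Or.inl h.symm
        · exact Or.inr h
      refine Tendsto.mono_left ?_ (nhdsWithin_mono _ hsub)
      rw [nhdsWithin_union, tendsto_sup, nhdsWithin_singleton]
      constructor
      · have := tendsto_pure_nhds (fun x : ℝ => x * (1 - Real.log x) ^ 2) 0
        simpa using this
      · exact tendsto_f_zero
    · exact (ContinuousAt.continuousWithinAt (by
        have : ContinuousAt Real.log x := Real.continuousAt_log h0.ne'
        fun_prop (disch := exact h0.ne')))
  · intro x hx
    rw [hint] at hx
    have hx0 : x ≠ 0 := ne_of_gt hx.1
    have h : HasDerivAt (fun x : ℝ => x * (1 - Real.log x) ^ 2)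
        (1 * (1 - Real.log x)^2 + x * (2 * (1 - Real.log x)^1 * (0 - x⁻¹))) x :=
      (hasDerivAt_id x).mul (((hasDerivAt_const x (1:ℝ)).sub (Real.hasDerivAt_log hx0)).pow 2)
    have h' : (1 * (1 - Real.log x)^2 + x * (2 * (1 - Real.log x)^1 * (0 - x⁻¹)))
        = Real.log x ^ 2 - 1 := by field_simp; ring
    rw [h'] at h
    exact h.hasDerivWithinAt
  · intro x hx
    rw [hint] at hx
    have hx0 : x ≠ 0 := ne_of_gt hx.1
    have h : HasDerivAt (fun x : ℝ => Real.log x ^ 2 - 1)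
        (2 * Real.log x ^ 1 * x⁻¹ - 0) x :=
      ((Real.hasDerivAt_log hx0).pow 2).sub (hasDerivAt_const x 1)
    have h' : (2 * Real.log x ^ 1 * x⁻¹ - 0) = 2 * Real.log x / x := by
      field_simp
      ring
    rw [h'] at h
    exact h.hasDerivWithinAt
  · intro x hx
    rw [hint] at hx
    have hlog : Real.log x ≤ 0 := Real.log_nonpos hx.1.le hx.2.le
    have : 2 * Real.log x ≤ 0 := by linarith
    exact div_nonpos_of_nonpos_of_nonneg this hx.1.le
end

section
/- For every natural number n ≥ 1 and every real b ≥ n - 1, the function f_n(x) = x * (b - ln x)^n is concave on the interval [0,1] (with f_n(0) := 0). -/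
/-- For `n ≥ 1` and `b ≥ n - 1`, the function `f_n(x) = x (b - ln x)^n`
(with `f_n 0 = 0`, which holds since `Real.log 0 = 0`) is concave on `[0,1]`. -/
theorem concaveOn_x_shifted_log_pow (n : ℕ) (hn : 1 ≤ n) (b : ℝ) (hb : (n : ℝ) - 1 ≤ b) :
    ConcaveOn ℝ (Set.Icc (0:ℝ) 1) (fun x : ℝ => x * (b - Real.log x) ^ n) := by
  have hint : interior (Set.Icc (0:ℝ) 1) = Set.Ioo 0 1 := interior_Icc
  refine concaveOn_of_hasDerivWithinAt2_nonpos (f' := fun x =>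
      (b - Real.log x) ^ n - n * (b - Real.log x) ^ (n - 1))
    (f'' := fun x => n * (b - Real.log x) ^ (n - 1) * (-x⁻¹)
      - n * ((n - 1 : ℕ) * (b - Real.log x) ^ (n - 1 - 1) * (-x⁻¹)))
    (convex_Icc 0 1) ?_ ?_ ?_ ?_
  · -- continuity
    intro x hx
    rcases eq_or_lt_of_le hx.1 with h0 | h0
    · -- x = 0
      subst h0
      have key : Filter.Tendsto (fun x : ℝ => x * (b - Real.log x) ^ n)
          (nhdsWithin 0 (Set.Ioi 0)) (nhds 0) := by
        have hr : (0:ℝ) < (n:ℝ)⁻¹ := by positivity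
        have h1 : Filter.Tendsto (fun x : ℝ => x ^ ((n:ℝ)⁻¹) * b - Real.log x * x ^ ((n:ℝ)⁻¹))
            (nhdsWithin 0 (Set.Ioi 0)) (nhds 0) := by
          have ha : Filter.Tendsto (fun x : ℝ => x ^ ((n:ℝ)⁻¹) * b)
              (nhdsWithin 0 (Set.Ioi 0)) (nhds 0) := by
            have := (Real.continuousAt_rpow_const 0 ((n:ℝ)⁻¹) (Or.inr hr.le)).continuousWithinAt
              (s := Set.Ioi 0)
            have h0 : (0:ℝ) ^ ((n:ℝ)⁻¹) = 0 := by
              rw [Real.zero_rpow hr.ne']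
            simpa [ContinuousWithinAt, h0, Pi.mul_def] using this.mul tendsto_const_nhds
          have hb' := tendsto_log_mul_rpow_nhdsGT_zero hr
          simpa using ha.sub hb'
        have h2 : Filter.Tendsto (fun x : ℝ => (x ^ ((n:ℝ)⁻¹) * (b - Real.log x)) ^ n)
            (nhdsWithin 0 (Set.Ioi 0)) (nhds 0) := by
          have := h1.pow n
          have hzero : (0:ℝ) ^ n = 0 := zero_pow (by omega)
          simpa [mul_sub, mul_comm, hzero] using this
        refine h2.congr' ?_
        filter_upwards [self_mem_nhdsWithin] with x (hx : 0 < x)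
        rw [mul_pow, ← Real.rpow_natCast (x ^ ((n:ℝ)⁻¹)) n, ← Real.rpow_mul hx.le,
          inv_mul_cancel₀ (Nat.cast_ne_zero.mpr (by omega)),
          Real.rpow_one]
      have : Filter.Tendsto (fun x : ℝ => x * (b - Real.log x) ^ n)
          (nhdsWithin 0 (Set.Icc 0 1)) (nhds 0) := by
        have hIci : Filter.Tendsto (fun x : ℝ => x * (b - Real.log x) ^ n)
            (nhdsWithin 0 (Set.Ici 0)) (nhds 0) := by
          rw [show Set.Ici (0:ℝ) = insert 0 (Set.Ioi 0) from Set.Ioi_insert.symm,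
            nhdsWithin_insert, Filter.tendsto_sup]
          refine ⟨?_, key⟩
          simpa using tendsto_pure_nhds (fun x : ℝ => x * (b - Real.log x) ^ n) 0
        exact hIci.mono_left (nhdsWithin_mono _ fun y hy => hy.1)
      simpa [ContinuousWithinAt] using this
    · -- x > 0
      exact ((continuousAt_id.mul (((continuousAt_const.sub
        (Real.continuousAt_log h0.ne')).pow n))).continuousWithinAt)
  · -- first derivative
    intro x hx
    rw [hint] at hx
    have hx0 : 0 < x := hx.1
    have h1 : HasDerivAt (fun y : ℝ => b - Real.log y) (-x⁻¹) x :=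
      (Real.hasDerivAt_log hx0.ne').const_sub b
    have hpow := h1.pow n
    have hf := (hasDerivAt_id x).mul hpow
    refine (HasDerivAt.hasDerivWithinAt ?_)
    convert hf using 1
    · rfl
    · rfl
    simp only [id, Pi.pow_apply]
    field_simp
    ring
  · -- second derivative
    intro x hx
    rw [hint] at hx
    have hx0 : 0 < x := hx.1
    have h1 : HasDerivAt (fun y : ℝ => b - Real.log y) (-x⁻¹) x :=
      (Real.hasDerivAt_log hx0.ne').const_sub b
    have hf := (h1.pow n).sub ((h1.pow (n-1)).const_mul (n:ℝ))
    exact hf.hasDerivWithinAt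
  · -- nonpositivity
    intro x hx
    rw [hint] at hx
    have hx0 : 0 < x := hx.1
    have hlog : Real.log x ≤ 0 := Real.log_nonpos hx0.le hx.2.le
    set A := b - Real.log x with hA
    have hAge : (n:ℝ) - 1 ≤ A := by linarith
    have hn1 : (1:ℝ) ≤ (n:ℝ) := by exact_mod_cast hn
    have hApos : 0 ≤ A := le_trans (by linarith) hAge
    have key : ((n:ℝ) - 1) * A ^ (n - 1 - 1) ≤ A ^ (n - 1) := by
      rcases Nat.lt_or_ge n 2 with h2 | h2
      · interval_cases n
        simp
      · have : n - 1 = (n - 1 - 1) + 1 := by omega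
        rw [this, pow_succ]
        have : ((n:ℝ) - 1) ≤ A := hAge
        calc ((n:ℝ) - 1) * A ^ (n - 1 - 1) = A ^ (n-1-1) * ((n:ℝ)-1) := by ring
          _ ≤ A ^ (n-1-1) * A := by
              exact mul_le_mul_of_nonneg_left hAge (pow_nonneg hApos _)
    have hcast : ((n - 1 : ℕ) : ℝ) = (n:ℝ) - 1 := by
      push_cast [Nat.cast_sub hn]; ring
    rw [hcast]
    have hn0 : (0:ℝ) ≤ n := Nat.cast_nonneg n
    have hinv : 0 ≤ x⁻¹ := by positivity
    have h := mul_nonneg (mul_nonneg hinv hn0) (sub_nonneg.mpr key)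
    nlinarith [h]
end

section
/- A polynomial p with real coefficients that is nonnegative on all of ℝ can be written as a sum of two squares of real polynomials: p = q^2 + r^2. -/
open Polynomial

private lemma key : ∀ n (p : Polynomial ℝ), p.natDegree = n → (∀ x : ℝ, 0 ≤ p.eval x) →
    ∃ q r : Polynomial ℝ, p = q ^ 2 + r ^ 2 := by
  intro n
  induction n using Nat.strong_induction_on with
  | _ n ih =>
  intro p hdeg hp
  rcases eq_or_ne p 0 with rfl | hp0
  · exact ⟨0, 0, by ring⟩
  by_cases hroot : ∃ a, p.eval a = 0
  · obtain ⟨a, ha⟩ := hroot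
    have hderiv : p.derivative.eval a = 0 := by
      have hmin : IsLocalMin (fun x => p.eval x) a :=
        Filter.Eventually.of_forall (fun x => by simpa [ha] using hp x)
      have := hmin.deriv_eq_zero
      rwa [Polynomial.deriv] at this
    obtain ⟨p₂, hp2⟩ := dvd_iff_isRoot.mpr (show IsRoot p a from ha)
    have h2 : p₂.eval a = 0 := by
      rw [hp2] at hderiv
      simpa using hderiv
    obtain ⟨p₁, hp1⟩ := dvd_iff_isRoot.mpr (show IsRoot p₂ a from h2)
    have hP : p = (X - C a) ^ 2 * p₁ := by rw [hp2, hp1]; ring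
    have hp1ne : p₁ ≠ 0 := by rintro rfl; simp at hP; exact hp0 hP
    have hdeg1 : p₁.natDegree < n := by
      have := natDegree_mul (pow_ne_zero 2 (X_sub_C_ne_zero a)) hp1ne
      rw [← hP, hdeg, natDegree_pow, natDegree_X_sub_C] at this
      omega
    have hne : ∀ x, x ≠ a → 0 ≤ p₁.eval x := by
      intro x hx
      have h := hp x
      rw [hP] at h
      simp only [eval_mul, eval_pow, eval_sub, eval_X, eval_C] at h
      have hxa : x - a ≠ 0 := sub_ne_zero.mpr hx
      have hpos : (0:ℝ) < (x - a) ^ 2 := by positivity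
      nlinarith
    have hnn : ∀ x, 0 ≤ p₁.eval x := by
      intro x
      rcases eq_or_ne x a with rfl | hx
      · have hcont : Filter.Tendsto (fun y => p₁.eval y) (nhdsWithin x {x}ᶜ) (nhds (p₁.eval x)) :=
          (p₁.continuous.tendsto x).mono_left nhdsWithin_le_nhds
        refine ge_of_tendsto hcont ?_
        filter_upwards [self_mem_nhdsWithin] with y hy
        exact hne y hy
      · exact hne x hx
    obtain ⟨q, r, hqr⟩ := ih _ hdeg1 p₁ rfl hnn
    exact ⟨(X - C a) * q, (X - C a) * r, by rw [hP, hqr]; ring⟩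
  · push_neg at hroot
    rcases Nat.eq_zero_or_pos n with hn0 | hn
    · have hc : p = C (p.coeff 0) := eq_C_of_natDegree_eq_zero (hn0 ▸ hdeg)
      have h0 : 0 ≤ p.coeff 0 := by
        have := hp 0
        rwa [hc, eval_C] at this
      refine ⟨C (Real.sqrt (p.coeff 0)), 0, ?_⟩
      nth_rewrite 1 [hc]
      rw [← C_pow, Real.sq_sqrt h0]
      ring
    · have hu : ¬IsUnit p := by
        intro h
        have := natDegree_eq_zero_of_isUnit h
        omega
      obtain ⟨g, hgm, hgi, hgd⟩ := p.exists_monic_irreducible_factor hu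
      have hg2 : g.natDegree ≤ 2 := hgi.natDegree_le_two
      have hg0 : 0 < g.natDegree := hgi.natDegree_pos
      have hgroot : ∀ x, g.eval x ≠ 0 := by
        intro x hx
        obtain ⟨p₁, hp1⟩ := hgd
        exact hroot x (by rw [hp1, eval_mul, hx, zero_mul])
      have hg1 : g.natDegree ≠ 1 := by
        intro h1
        have := Monic.eq_X_add_C hgm h1
        exact hgroot (-(g.coeff 0)) (by rw [this]; simp)
      have hgd2 : g.natDegree = 2 := by omega
      obtain ⟨b, c, heval⟩ : ∃ b c : ℝ, ∀ x, g.eval x = x ^ 2 + b * x + c := by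
        refine ⟨g.coeff 1, g.coeff 0, fun x => ?_⟩
        have hco2 : g.coeff 2 = 1 := by
          have := hgm.leadingCoeff
          rwa [leadingCoeff, hgd2] at this
        rw [eval_eq_sum_range, hgd2]
        simp [Finset.sum_range_succ, hco2]
        ring
      obtain ⟨d, hd⟩ : ∃ d : ℝ, d = c - b ^ 2 / 4 := ⟨_, rfl⟩
      have hdpos : 0 < d := by
        by_contra hle
        push_neg at hle
        apply hgroot (-b / 2 + Real.sqrt (-d))
        rw [heval]
        have hs := Real.sq_sqrt (neg_nonneg.mpr hle)
        linear_combination hs - hd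
      have hgpos : ∀ x, 0 < g.eval x := by
        intro x
        rw [heval]
        nlinarith [sq_nonneg (x + b / 2), hd, hdpos]
      have hgsum : g = (X + C (b / 2)) ^ 2 + (C (Real.sqrt d)) ^ 2 := by
        apply Polynomial.funext
        intro x
        simp only [eval_add, eval_pow, eval_X, eval_C, heval]
        have hs := Real.sq_sqrt hdpos.le
        linear_combination -hs - hd
      obtain ⟨p₁, hp1⟩ := hgd
      have hp1ne : p₁ ≠ 0 := by rintro rfl; rw [mul_zero] at hp1; exact hp0 hp1
      have hdeg1 : p₁.natDegree < n := by
        have := natDegree_mul (hgm.ne_zero) hp1ne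
        rw [← hp1, hdeg, hgd2] at this
        omega
      have hnn : ∀ x, 0 ≤ p₁.eval x := by
        intro x
        have h := hp x
        rw [hp1, eval_mul] at h
        nlinarith [hgpos x]
      obtain ⟨q, r, hqr⟩ := ih _ hdeg1 p₁ rfl hnn
      refine ⟨(X + C (b / 2)) * q - C (Real.sqrt d) * r,
              (X + C (b / 2)) * r + C (Real.sqrt d) * q, ?_⟩
      rw [hp1, hgsum, hqr]
      ring

/-- A real polynomial that is nonnegative on all of `ℝ` is a sum of two squares. -/
theorem exists_sq_add_sq_of_nonneg (p : Polynomial ℝ)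
    (hp : ∀ x : ℝ, 0 ≤ p.eval x) :
    ∃ q r : Polynomial ℝ, p = q ^ 2 + r ^ 2 :=
  key p.natDegree p rfl hp
end

section
/- A polynomial p with real coefficients that is nonnegative on the negative half-line (-∞, 0] can be written in the form p(x) = q(x)^2 + r(x)^2 - x*(s(x)^2 + t(x)^2) for some real polynomials q, r, s, t. -/
open Polynomial

/-- A real polynomial nonnegative at a point `r` with value zero and nonneg around has `(X-r)^2` dividing. -/
lemma sq_dvd_of_isRoot_of_nonneg (p : ℝ[X]) (hp : ∀ x, 0 ≤ p.eval x) {r : ℝ}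
    (hr : p.IsRoot r) : (X - C r) ^ 2 ∣ p := by
  obtain ⟨g, hg⟩ := (dvd_iff_isRoot.2 hr)
  have hmin : IsLocalMin (fun x => p.eval x) r := by
    apply Filter.Eventually.of_forall
    intro x
    simpa [hr.eq_zero] using hp x
  have hd : p.derivative.eval r = 0 := by
    have := hmin.deriv_eq_zero
    rwa [Polynomial.deriv] at this
  have hgr : g.IsRoot r := by
    have h1 := congrArg derivative hg
    rw [derivative_mul, derivative_sub, derivative_X, derivative_C] at h1
    have h2 := congrArg (Polynomial.eval r) h1
    simp [hd] at h2
    simpa [IsRoot] using h2.symm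
  obtain ⟨h, hh⟩ := (dvd_iff_isRoot.2 hgr)
  exact ⟨h, by rw [hg, hh]; ring⟩

lemma nonneg_of_mul_nonneg {Q h : ℝ[X]} (hQh : ∀ x, 0 ≤ (Q * h).eval x)
    (hQ : ∀ x, 0 < Q.eval x) : ∀ x, 0 ≤ h.eval x := by
  intro x
  have := hQh x
  rw [eval_mul] at this
  nlinarith [hQ x]

/-- A real polynomial that is nonnegative everywhere is a sum of two squares. -/
lemma sum_two_squares : ∀ (n : ℕ) (p : ℝ[X]), p.natDegree = n → (∀ x, 0 ≤ p.eval x) →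
    ∃ a b : ℝ[X], p = a ^ 2 + b ^ 2 := by
  intro n
  induction n using Nat.strong_induction_on with
  | _ n ih =>
    intro p hn hp
    by_cases h0 : p = 0
    · exact ⟨0, 0, by simp [h0]⟩
    by_cases hroot : ∃ r : ℝ, p.IsRoot r
    · obtain ⟨r, hr⟩ := hroot
      obtain ⟨h, hh⟩ := sq_dvd_of_isRoot_of_nonneg p hp hr
      have hne : h ≠ 0 := by rintro rfl; simp at hh; exact h0 hh
      have hhn : ∀ x, 0 ≤ h.eval x := by
        intro x
        rcases eq_or_ne x r with rfl | hxr
        · -- continuity argument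
          have htend : Filter.Tendsto (fun y => h.eval y) (nhdsWithin x {x}ᶜ) (nhds (h.eval x)) :=
            (h.continuous.tendsto x).mono_left nhdsWithin_le_nhds
          refine ge_of_tendsto htend ?_
          filter_upwards [self_mem_nhdsWithin] with y hy
          have := hp y
          rw [hh, eval_mul, eval_pow, eval_sub, eval_X, eval_C] at this
          have hy' : (y - x) ^ 2 > 0 := by
            have : y - x ≠ 0 := sub_ne_zero.2 hy
            positivity
          nlinarith
        · have := hp x
          rw [hh, eval_mul, eval_pow, eval_sub, eval_X, eval_C] at this
          have hx' : (x - r) ^ 2 > 0 := by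
            have : x - r ≠ 0 := sub_ne_zero.2 hxr
            positivity
          nlinarith
      have hdeg : h.natDegree < n := by
        have : p.natDegree = 2 + h.natDegree := by
          rw [hh, natDegree_mul (pow_ne_zero _ (X_sub_C_ne_zero r)) hne,
            natDegree_pow, natDegree_X_sub_C]
        rw [hn] at this; omega
      obtain ⟨a, b, hab⟩ := ih h.natDegree hdeg h rfl hhn
      exact ⟨(X - C r) * a, (X - C r) * b, by rw [hh, hab]; ring⟩
    · push_neg at hroot
      by_cases hd0 : p.natDegree = 0
      · obtain ⟨c, rfl⟩ := natDegree_eq_zero.1 hd0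
        have hc : 0 ≤ c := by simpa using hp 0
        exact ⟨C (Real.sqrt c), 0, by
          rw [← C_pow, Real.sq_sqrt hc]
          simp⟩
      · -- complex root
        have hdegpos : 0 < p.degree := natDegree_pos_iff_degree_pos.1 (Nat.pos_of_ne_zero hd0)
        obtain ⟨z, hz⟩ : ∃ z : ℂ, aeval z p = 0 :=
          IsAlgClosed.exists_aeval_eq_zero _ p hdegpos.ne'
        have him : z.im ≠ 0 := by
          intro h0im
          lift z to ℝ using h0im with x
          erw [aeval_ofReal, RCLike.ofReal_eq_zero] at hz
          exact hroot x hz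
        obtain ⟨h, hh⟩ := p.quadratic_dvd_of_aeval_eq_zero_im_ne_zero hz him
        set Q : ℝ[X] := X ^ 2 - C (2 * z.re) * X + C (‖z‖ ^ 2) with hQdef
        have hnorm : ‖z‖ ^ 2 = z.re ^ 2 + z.im ^ 2 := by
          rw [Complex.sq_norm, Complex.normSq_apply]; ring
        have hQpos : ∀ x, 0 < Q.eval x := by
          intro x
          simp only [hQdef, eval_add, eval_sub, eval_mul, eval_pow, eval_X, eval_C]
          rw [hnorm]
          have him2 : 0 < z.im ^ 2 := by positivity
          nlinarith [sq_nonneg (x - z.re)]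
        have hne : h ≠ 0 := by rintro rfl; simp at hh; exact h0 hh
        have hhn : ∀ x, 0 ≤ h.eval x := nonneg_of_mul_nonneg (by rw [← hh]; exact hp) hQpos
        have hQdeg : Q.natDegree = 2 := by
          rw [hQdef]; compute_degree!
        have hdeg : h.natDegree < n := by
          have hQne : Q ≠ 0 := by
            intro hQ0
            have := hQpos 0
            rw [hQ0] at this; simp at this
          have : p.natDegree = 2 + h.natDegree := by
            rw [hh, natDegree_mul hQne hne, hQdeg]
          rw [hn] at this; omega
        obtain ⟨a, b, hab⟩ := ih h.natDegree hdeg h rfl hhn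
        refine ⟨(X - C z.re) * a - C z.im * b, (X - C z.re) * b + C z.im * a, ?_⟩
        have hQform : Q = (X - C z.re) ^ 2 + (C z.im) ^ 2 := by
          rw [hQdef, hnorm]
          simp only [C_add, C_pow, C_mul, map_ofNat]
          ring
        rw [hh, hab, hQform]
        ring

/-- Even/odd decomposition of a polynomial. -/
lemma even_odd_decomp (A : ℝ[X]) : ∃ a b : ℝ[X], A = a.comp (X ^ 2) + X * b.comp (X ^ 2) := by
  induction A using Polynomial.induction_on' with
  | add p q hp hq =>
    obtain ⟨a, b, hab⟩ := hp
    obtain ⟨c, d, hcd⟩ := hq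
    exact ⟨a + c, b + d, by rw [hab, hcd, add_comp, add_comp]; ring⟩
  | monomial n c =>
    rcases Nat.even_or_odd n with ⟨m, hm⟩ | ⟨m, hm⟩
    · refine ⟨C c * X ^ m, 0, ?_⟩
      rw [mul_comp, C_comp, X_pow_comp, zero_comp, ← pow_mul, ← C_mul_X_pow_eq_monomial]
      rw [hm]
      ring_nf
    · refine ⟨0, C c * X ^ m, ?_⟩
      rw [mul_comp, C_comp, X_pow_comp, zero_comp, ← pow_mul, ← C_mul_X_pow_eq_monomial]
      rw [hm]
      ring_nf

/-- Pólya–Szegő representation on the negative half-line: a real polynomial that is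
nonnegative on `(-∞, 0]` can be written as `p = q^2 + r^2 - X (s^2 + t^2)`. -/
theorem exists_polya_szego_of_nonneg_on_neg (p : Polynomial ℝ)
    (hp : ∀ x : ℝ, x ≤ 0 → 0 ≤ p.eval x) :
    ∃ q r s t : Polynomial ℝ,
      p = q ^ 2 + r ^ 2 - Polynomial.X * (s ^ 2 + t ^ 2) := by
  set P2 : ℝ[X] := p.comp (-(X ^ 2)) with hP2def
  have hP2 : ∀ y : ℝ, 0 ≤ P2.eval y := by
    intro y
    rw [hP2def, eval_comp]
    simp only [eval_neg, eval_pow, eval_X]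
    exact hp (-(y ^ 2)) (by positivity |> neg_nonpos_of_nonneg)
  obtain ⟨A, B, hAB⟩ := sum_two_squares P2.natDegree P2 rfl hP2
  obtain ⟨a, b, hab⟩ := even_odd_decomp A
  obtain ⟨c, d, hcd⟩ := even_odd_decomp B
  refine ⟨a.comp (-X), c.comp (-X), b.comp (-X), d.comp (-X), ?_⟩
  apply Polynomial.eq_of_infinite_eval_eq
  apply Set.Infinite.mono (s := Set.Iic (0:ℝ)) ?_ (Set.Iic_infinite 0)
  intro x hx
  simp only [Set.mem_setOf_eq]
  set y := Real.sqrt (-x) with hy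
  have hy2 : y ^ 2 = -x := Real.sq_sqrt (by linarith [Set.mem_Iic.1 hx])
  have key : ∀ u : ℝ, u ^ 2 = -x → p.eval x =
      (a.eval (-x) + u * b.eval (-x)) ^ 2 + (c.eval (-x) + u * d.eval (-x)) ^ 2 := by
    intro u hu
    have e1 : p.eval x = P2.eval u := by
      rw [hP2def, eval_comp]
      simp only [eval_neg, eval_pow, eval_X]
      rw [hu]; ring_nf
    rw [e1, hAB]
    simp only [eval_add, eval_mul, eval_pow, eval_X]
    rw [hab, hcd]
    simp only [eval_add, eval_mul, eval_pow, eval_X, eval_comp]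
    rw [hu]
  have e1 := key y hy2
  have e2 := key (-y) (by rw [← hy2]; ring)
  simp only [eval_sub, eval_add, eval_mul, eval_pow, eval_X, eval_comp, eval_neg]
  nlinarith [e1, e2]
end

section
/- Let λ, μ be probability vectors with λ majorizing μ. Define S(ν) = -∑_i ν_i ln ν_i and C(ν) = ∑_i ν_i (ln ν_i)^2 - S(ν)^2. Then S(μ) - S(λ) ≥ (C(λ) - C(μ)) / (S(λ) + S(μ) + 2). -/
open Finset Real



/-- `l` majorizes `m`: for each `k`, the sum of the `k` largest entries of `m` is at most
the sum of the `k` largest entries of `l` (phrased via subsets of each cardinality). -/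
def Majorizes {ι : Type*} [Fintype ι] (l m : ι → ℝ) : Prop :=
  ∀ A : Finset ι, ∃ B : Finset ι, B.card = A.card ∧ ∑ i ∈ A, m i ≤ ∑ i ∈ B, l i

/-- Shannon entropy in nats. -/
noncomputable def entropy {d : ℕ} (ν : Fin d → ℝ) : ℝ :=
  -∑ i, ν i * Real.log (ν i)

/-- Varentropy (variance of the modular Hamiltonian `-ln ν`). -/
noncomputable def varentropy {d : ℕ} (ν : Fin d → ℝ) : ℝ :=
  (∑ i, ν i * (Real.log (ν i)) ^ 2) - (entropy ν) ^ 2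


noncomputable def gfun (x : ℝ) : ℝ := x * (1 - Real.log x) ^ 2

lemma gfun_hasDeriv {t : ℝ} (ht : 0 < t) :
    HasDerivAt gfun ((Real.log t) ^ 2 - 1) t := by
  have h1 : HasDerivAt (fun x : ℝ => 1 - Real.log x) (-t⁻¹) t := by
    simpa using (Real.hasDerivAt_log ht.ne').const_sub 1
  have h2 : HasDerivAt (fun x : ℝ => (1 - Real.log x) ^ 2)
      (2 * (1 - Real.log t) ^ 1 * (-t⁻¹)) t := h1.pow 2
  have h3 := (hasDerivAt_id t).mul h2
  have : 1 * (1 - Real.log t) ^ 2 + t * (2 * (1 - Real.log t) ^ 1 * (-t⁻¹)) =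
      (Real.log t) ^ 2 - 1 := by
    field_simp
    ring
  simp only [id_eq] at h3
  rw [this] at h3
  exact h3

lemma gfun_contOn {u v : ℝ} (hu : 0 < u) : ContinuousOn gfun (Set.Icc u v) := by
  intro t ht
  exact ((gfun_hasDeriv (lt_of_lt_of_le hu ht.1)).differentiableAt.continuousAt).continuousWithinAt

lemma gfun_diffOn {u v : ℝ} (hu : 0 < u) :
    DifferentiableOn ℝ gfun (interior (Set.Icc u v)) := by
  rw [interior_Icc]
  intro t ht
  exact ((gfun_hasDeriv (lt_of_lt_of_le hu ht.1.le)).differentiableAt).differentiableWithinAt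

lemma supergrad {x y : ℝ} (hx : 0 < x) (hx1 : x ≤ 1) (hy : 0 < y) (hy1 : y ≤ 1) :
    gfun x ≤ gfun y + ((Real.log y) ^ 2 - 1) * (x - y) := by
  have hly : Real.log y ≤ 0 := Real.log_nonpos hy.le hy1
  rcases le_total x y with h | h
  · have hC : ∀ t ∈ interior (Set.Icc x y), (Real.log y) ^ 2 - 1 ≤ deriv gfun t := by
      intro t htI
      rw [interior_Icc] at htI
      have ht : 0 < t := hx.trans htI.1
      rw [(gfun_hasDeriv ht).deriv]
      have hlt : Real.log t ≤ Real.log y := (Real.log_le_log_iff ht hy).2 htI.2.le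
      nlinarith
    have := (convex_Icc x y).mul_sub_le_image_sub_of_le_deriv (gfun_contOn hx) (gfun_diffOn hx)
      hC x (Set.left_mem_Icc.2 h) y (Set.right_mem_Icc.2 h) h
    linarith
  · have hC : ∀ t ∈ interior (Set.Icc y x), deriv gfun t ≤ (Real.log y) ^ 2 - 1 := by
      intro t htI
      rw [interior_Icc] at htI
      have ht : 0 < t := hy.trans htI.1
      rw [(gfun_hasDeriv ht).deriv]
      have hlt : Real.log y ≤ Real.log t := (Real.log_le_log_iff hy ht).2 htI.1.le
      have hlt1 : Real.log t ≤ 0 := Real.log_nonpos ht.le (le_trans htI.2.le hx1)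
      nlinarith
    have := (convex_Icc y x).image_sub_le_mul_sub_of_deriv_le (gfun_contOn hy) (gfun_diffOn hy)
      hC y (Set.left_mem_Icc.2 h) x (Set.right_mem_Icc.2 h) h
    linarith

lemma abel_le {d : ℕ} (c Δ : ℕ → ℝ) (hc : ∀ k, k + 1 < d → c k ≤ c (k + 1))
    (hP : ∀ k, k ≤ d → 0 ≤ ∑ i ∈ range k, Δ i)
    (hPd : ∑ i ∈ range d, Δ i = 0) :
    ∑ i ∈ range d, c i * Δ i ≤ 0 := by
  have hb := Finset.sum_range_by_parts c Δ d
  simp only [smul_eq_mul] at hb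
  rw [hb, hPd, mul_zero, zero_sub, neg_nonpos]
  apply Finset.sum_nonneg
  intro i hi
  rw [mem_range] at hi
  have h1 : i + 1 < d := by omega
  exact mul_nonneg (by linarith [hc i h1]) (hP (i + 1) (by omega))

lemma schur_core (d : ℕ) (a b : ℕ → ℝ)
    (ha : ∀ k, k < d → a k ∈ Set.Ioc (0 : ℝ) 1) (hb : ∀ k, k < d → b k ∈ Set.Ioc (0 : ℝ) 1)
    (hbmono : ∀ k, k + 1 < d → b (k + 1) ≤ b k)
    (hps : ∀ k, k ≤ d → ∑ i ∈ range k, b i ≤ ∑ i ∈ range k, a i)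
    (htot : ∑ i ∈ range d, a i = ∑ i ∈ range d, b i) :
    ∑ i ∈ range d, gfun (a i) ≤ ∑ i ∈ range d, gfun (b i) := by
  have h1 : ∑ i ∈ range d, gfun (a i) ≤
      ∑ i ∈ range d, (gfun (b i) + ((Real.log (b i)) ^ 2 - 1) * (a i - b i)) := by
    apply Finset.sum_le_sum
    intro i hi
    rw [mem_range] at hi
    exact supergrad (ha i hi).1 (ha i hi).2 (hb i hi).1 (hb i hi).2
  rw [Finset.sum_add_distrib] at h1
  have h2 : ∑ i ∈ range d, ((Real.log (b i)) ^ 2 - 1) * (a i - b i) ≤ 0 := by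
    apply abel_le
    · intro k hk
      have hk1 := hb k (by omega)
      have hk2 := hb (k + 1) hk
      have hl1 : Real.log (b (k + 1)) ≤ Real.log (b k) :=
        (Real.log_le_log_iff hk2.1 hk1.1).2 (hbmono k hk)
      have hl2 : Real.log (b k) ≤ 0 := Real.log_nonpos hk1.1.le hk1.2
      nlinarith
    · intro k hk
      have := hps k hk
      rw [Finset.sum_sub_distrib]
      linarith
    · rw [Finset.sum_sub_distrib]
      linarith
  linarith

lemma le_of_strictMono_nat {k : ℕ} (f : Fin k → ℕ) (hf : StrictMono f) (j : Fin k) :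
    (j : ℕ) ≤ f j := by
  suffices h : ∀ n (hn : n < k), n ≤ f ⟨n, hn⟩ by simpa using h j j.isLt
  intro n
  induction n with
  | zero => intro hn; exact Nat.zero_le _
  | succ n ih =>
      intro hn
      have h1 : n < k := Nat.lt_of_succ_lt hn
      have hlt : f ⟨n, h1⟩ < f ⟨n + 1, hn⟩ := hf (by simp [Fin.lt_def])
      have := ih h1
      omega

lemma sum_le_sorted {d : ℕ} (v : Fin d → ℝ) (σ : Equiv.Perm (Fin d))
    (hσ : ∀ i j : Fin d, i ≤ j → v (σ j) ≤ v (σ i)) (B : Finset (Fin d)) :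
    ∑ i ∈ B, v i ≤ ∑ j ∈ range B.card, (if h : j < d then v (σ ⟨j, h⟩) else 0) := by
  classical
  have hk : B.card ≤ d := by simpa using Finset.card_le_univ B
  set B' := B.image σ.symm with hB'
  have hcard' : B'.card = B.card := by
    rw [hB', Finset.card_image_of_injective _ σ.symm.injective]
  let e := B'.orderIsoOfFin hcard'
  have hsum1 : ∑ i ∈ B, v i = ∑ i ∈ B', v (σ i) := by
    rw [hB', Finset.sum_image (fun x _ y _ h => σ.symm.injective h)]
    simp
  have hsum2 : ∑ i ∈ B', v (σ i) = ∑ j : Fin B.card, v (σ (e j)) := by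
    rw [← Finset.sum_coe_sort B' (fun i => v (σ i))]
    exact (Equiv.sum_comp e.toEquiv (fun x : B' => v (σ x))).symm
  have hmono : StrictMono (fun j : Fin B.card => (((e j : B') : Fin d) : ℕ)) := by
    intro a b hab
    have h2 : ((e a : B') : Fin d) < ((e b : B') : Fin d) := e.strictMono hab
    exact h2
  have hterm : ∀ j : Fin B.card,
      v (σ ((e j : B') : Fin d)) ≤ (if h : (j : ℕ) < d then v (σ ⟨j, h⟩) else 0) := by
    intro j
    have hjd : (j : ℕ) < d := lt_of_lt_of_le j.isLt hk
    rw [dif_pos hjd]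
    apply hσ
    have := le_of_strictMono_nat _ hmono j
    exact this
  calc ∑ i ∈ B, v i = ∑ j : Fin B.card, v (σ (e j)) := by rw [hsum1, hsum2]
    _ ≤ ∑ j : Fin B.card, (if h : (j : ℕ) < d then v (σ ⟨j, h⟩) else 0) :=
        Finset.sum_le_sum (fun j _ => hterm j)
    _ = ∑ j ∈ range B.card, (if h : j < d then v (σ ⟨j, h⟩) else 0) :=
        Fin.sum_univ_eq_sum_range (fun n => if h : n < d then v (σ ⟨n, h⟩) else 0) B.card

lemma sum_gfun {d : ℕ} (ν : Fin d → ℝ) (h1 : ∑ i, ν i = 1) :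
    ∑ i, gfun (ν i) = varentropy ν + (entropy ν + 1) ^ 2 := by
  have e1 : ∑ i, gfun (ν i) =
      ∑ i, ν i - 2 * ∑ i, ν i * Real.log (ν i) + ∑ i, ν i * (Real.log (ν i)) ^ 2 := by
    rw [Finset.mul_sum, ← Finset.sum_sub_distrib, ← Finset.sum_add_distrib]
    exact Finset.sum_congr rfl fun i _ => by unfold gfun; ring
  rw [e1, h1]
  unfold varentropy entropy
  ring

lemma entropy_nonneg {d : ℕ} (ν : Fin d → ℝ) (h0 : ∀ i, 0 < ν i) (h1 : ∑ i, ν i = 1) :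
    0 ≤ entropy ν := by
  unfold entropy
  rw [neg_nonneg]
  apply Finset.sum_nonpos
  intro i _
  have hle : ν i ≤ 1 := h1 ▸ Finset.single_le_sum (fun j _ => (h0 j).le) (Finset.mem_univ i)
  have h := Real.log_nonpos (h0 i).le hle
  exact mul_nonpos_iff.mpr (Or.inl ⟨(h0 i).le, h⟩)


/-- If the probability vector `l` majorizes `m`, then
`S(m) - S(l) ≥ (C(l) - C(m)) / (S(l) + S(m) + 2)`. -/
theorem entropy_production_varentropy_bound {d : ℕ} (l m : Fin d → ℝ)
    (hl0 : ∀ i, 0 < l i) (hl1 : ∑ i, l i = 1)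
    (hm0 : ∀ i, 0 < m i) (hm1 : ∑ i, m i = 1)
    (hmaj : Majorizes l m) :
    entropy m - entropy l ≥
      (varentropy l - varentropy m) / (entropy l + entropy m + 2) := by
  have hmaj' := hmaj
  unfold Majorizes at hmaj'

  classical
  have hlle1 : ∀ i, l i ≤ 1 :=
    fun i => hl1 ▸ Finset.single_le_sum (fun j _ => (hl0 j).le) (Finset.mem_univ i)
  have hmle1 : ∀ i, m i ≤ 1 :=
    fun i => hm1 ▸ Finset.single_le_sum (fun j _ => (hm0 j).le) (Finset.mem_univ i)
  set σ : Equiv.Perm (Fin d) := Tuple.sort (fun i => -(l i)) with hσdef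
  set τ : Equiv.Perm (Fin d) := Tuple.sort (fun i => -(m i)) with hτdef
  have hσ : ∀ i j : Fin d, i ≤ j → l (σ j) ≤ l (σ i) := by
    intro i j hij
    have := Tuple.monotone_sort (fun i => -(l i)) hij
    simp only [Function.comp_apply] at this
    linarith
  have hτ : ∀ i j : Fin d, i ≤ j → m (τ j) ≤ m (τ i) := by
    intro i j hij
    have := Tuple.monotone_sort (fun i => -(m i)) hij
    simp only [Function.comp_apply] at this
    linarith
  set a : ℕ → ℝ := fun n => if h : n < d then l (σ ⟨n, h⟩) else 0 with hadef
  set b : ℕ → ℝ := fun n => if h : n < d then m (τ ⟨n, h⟩) else 0 with hbdef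
  have haval : ∀ j : Fin d, a (j : ℕ) = l (σ j) := by
    intro j; simp [hadef, j.isLt]
  have hbval : ∀ j : Fin d, b (j : ℕ) = m (τ j) := by
    intro j; simp [hbdef, j.isLt]
  have hsa : ∑ i ∈ range d, a i = 1 := by
    rw [← Fin.sum_univ_eq_sum_range a d]
    rw [Finset.sum_congr rfl (fun j _ => haval j)]
    rw [Equiv.sum_comp σ l]
    exact hl1
  have hsb : ∑ i ∈ range d, b i = 1 := by
    rw [← Fin.sum_univ_eq_sum_range b d]
    rw [Finset.sum_congr rfl (fun j _ => hbval j)]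
    rw [Equiv.sum_comp τ m]
    exact hm1
  have hps : ∀ k, k ≤ d → ∑ i ∈ range k, b i ≤ ∑ i ∈ range k, a i := by
    intro k hk
    set A : Finset (Fin d) := Finset.image (fun j : Fin k => τ (Fin.castLE hk j)) Finset.univ
      with hAdef
    have hinj : Function.Injective (fun j : Fin k => τ (Fin.castLE hk j)) :=
      fun x y h => Fin.castLE_injective hk (τ.injective h)
    have hAcard : A.card = k := by
      rw [hAdef, Finset.card_image_of_injective _ hinj, Finset.card_univ, Fintype.card_fin]
    have hAsum : ∑ i ∈ A, m i = ∑ i ∈ range k, b i := by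
      rw [hAdef, Finset.sum_image (fun x _ y _ h => hinj h)]
      rw [← Fin.sum_univ_eq_sum_range b k]
      apply Finset.sum_congr rfl
      intro j _
      have hjd : (j : ℕ) < d := lt_of_lt_of_le j.isLt hk
      simp [hbdef, hjd]
      rfl
    obtain ⟨B, hBcard, hle⟩ := hmaj' A
    have htop := sum_le_sorted l σ hσ B
    rw [hBcard, hAcard] at htop
    calc ∑ i ∈ range k, b i = ∑ i ∈ A, m i := hAsum.symm
      _ ≤ ∑ i ∈ B, l i := hle
      _ ≤ ∑ i ∈ range k, a i := htop
  have ha : ∀ k, k < d → a k ∈ Set.Ioc (0 : ℝ) 1 := by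
    intro k hk
    simp only [hadef, dif_pos hk]
    exact ⟨hl0 _, hlle1 _⟩
  have hb : ∀ k, k < d → b k ∈ Set.Ioc (0 : ℝ) 1 := by
    intro k hk
    simp only [hbdef, dif_pos hk]
    exact ⟨hm0 _, hmle1 _⟩
  have hbmono : ∀ k, k + 1 < d → b (k + 1) ≤ b k := by
    intro k hk
    have hk' : k < d := by omega
    simp only [hbdef, dif_pos hk, dif_pos hk']
    exact hτ ⟨k, hk'⟩ ⟨k + 1, hk⟩ (by simp [Fin.le_def])
  have hcore := schur_core d a b ha hb hbmono hps (by rw [hsa, hsb])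
  have hgl : ∑ i ∈ range d, gfun (a i) = ∑ i, gfun (l i) := by
    rw [← Fin.sum_univ_eq_sum_range (fun n => gfun (a n)) d]
    rw [Finset.sum_congr rfl (fun j _ => by rw [haval j])]
    exact Equiv.sum_comp σ (fun i => gfun (l i))
  have hgm : ∑ i ∈ range d, gfun (b i) = ∑ i, gfun (m i) := by
    rw [← Fin.sum_univ_eq_sum_range (fun n => gfun (b n)) d]
    rw [Finset.sum_congr rfl (fun j _ => by rw [hbval j])]
    exact Equiv.sum_comp τ (fun i => gfun (m i))
  rw [hgl, hgm, sum_gfun l hl1, sum_gfun m hm1] at hcore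
  have hSl := entropy_nonneg l hl0 hl1
  have hSm := entropy_nonneg m hm0 hm1
  have hD : 0 < entropy l + entropy m + 2 := by linarith
  rw [ge_iff_le, div_le_iff₀ hD]
  nlinarith [hcore]
end

section
/- The map ν ↦ ∑_i ν_i (1 - ln ν_i)^2 on probability vectors is Schur concave: if λ majorizes μ then ∑_i λ_i (1 - ln λ_i)^2 ≤ ∑_i μ_i (1 - ln μ_i)^2. -/
open Real Finset Set

noncomputable def gM2 : ℝ → ℝ := fun x => x * (1 - Real.log x) ^ 2

noncomputable def gM2' : ℝ → ℝ := fun x => Real.log x ^ 2 - 1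

lemma hasDerivAt_gM2 {x : ℝ} (hx : 0 < x) : HasDerivAt gM2 (gM2' x) x := by
  have h1 : HasDerivAt (fun y : ℝ => 1 - Real.log y) (-x⁻¹) x := by
    simpa using ((Real.hasDerivAt_log hx.ne').const_sub 1)
  have h2 : HasDerivAt (fun y : ℝ => (1 - Real.log y) ^ 2)
      (2 * (1 - Real.log x) ^ 1 * (-x⁻¹)) x := h1.pow 2
  have h3 := (hasDerivAt_id x).mul h2
  have hx' : x ≠ 0 := hx.ne'
  refine h3.congr_deriv ?_
  unfold gM2'
  simp only [id]
  field_simp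
  ring

lemma concaveOn_gM2 : ConcaveOn ℝ (Set.Ioc (0:ℝ) 1) gM2 := by
  have hint : interior (Set.Ioc (0:ℝ) 1) = Set.Ioo 0 1 := interior_Ioc
  apply AntitoneOn.concaveOn_of_deriv (convex_Ioc 0 1)
  · intro x hx
    exact (hasDerivAt_gM2 hx.1).differentiableAt.continuousAt.continuousWithinAt
  · rw [hint]
    intro x hx
    exact (hasDerivAt_gM2 hx.1).differentiableAt.differentiableWithinAt
  · rw [hint]
    intro x hx y hy hxy
    rw [(hasDerivAt_gM2 hx.1).deriv, (hasDerivAt_gM2 hy.1).deriv]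
    unfold gM2'
    have h1 : Real.log x ≤ Real.log y := Real.log_le_log hx.1 hxy
    have h2 : Real.log y ≤ 0 := Real.log_nonpos hy.1.le hy.2.le
    nlinarith

/-- slope of `gM2`, with derivative on the diagonal. -/
noncomputable def CM2 : ℝ → ℝ → ℝ := fun x y =>
  if x = y then gM2' x else (gM2 y - gM2 x) / (y - x)

lemma CM2_comm (x y : ℝ) : CM2 x y = CM2 y x := by
  unfold CM2
  rcases eq_or_ne x y with rfl | h
  · simp
  · rw [if_neg h, if_neg h.symm]
    rw [div_eq_div_iff (by simpa [sub_eq_zero] using h.symm)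
      (by simpa [sub_eq_zero] using h)]
    ring

lemma CM2_spec (x y : ℝ) : gM2 y - gM2 x = CM2 x y * (y - x) := by
  unfold CM2
  rcases eq_or_ne x y with rfl | h
  · simp
  · rw [if_neg h, div_mul_cancel₀]
    simpa [sub_eq_zero] using h.symm

lemma CM2_anti_right {x y₁ y₂ : ℝ} (hx : x ∈ Set.Ioc (0:ℝ) 1)
    (hy₁ : y₁ ∈ Set.Ioc (0:ℝ) 1) (hy₂ : y₂ ∈ Set.Ioc (0:ℝ) 1) (h : y₁ ≤ y₂) :
    CM2 x y₂ ≤ CM2 x y₁ := by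
  rcases eq_or_lt_of_le h with rfl | hlt
  · exact le_rfl
  have hslope : ∀ z, slope gM2 x z = (gM2 z - gM2 x) / (z - x) := by
    intro z; rw [slope_def_field]
  rcases eq_or_ne x y₁ with rfl | h1
  · -- x = y₁ < y₂ : slope x y₂ ≤ gM2' x
    rw [CM2, if_neg (ne_of_lt hlt), CM2, if_pos rfl]
    have := concaveOn_gM2.slope_le_of_hasDerivAt hx hy₂ hlt (hasDerivAt_gM2 hx.1)
    rwa [hslope] at this
  rcases eq_or_ne x y₂ with rfl | h2
  · -- y₁ < x = y₂ : gM2' x ≤ slope y₁ x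
    rw [CM2, if_pos rfl, CM2, if_neg h1]
    have := concaveOn_gM2.le_slope_of_hasDerivAt hy₁ hx hlt (hasDerivAt_gM2 hx.1)
    rw [slope_comm, hslope] at this
    exact this
  · rw [CM2, if_neg h2, CM2, if_neg h1]
    have := (concaveOn_gM2.slope_anti hx) (a := y₁) (b := y₂)
      ⟨hy₁, Ne.symm h1⟩ ⟨hy₂, Ne.symm h2⟩ h
    rw [hslope, hslope] at this
    exact this

lemma CM2_anti {x x' y y' : ℝ} (hx : x ∈ Set.Ioc (0:ℝ) 1) (hx' : x' ∈ Set.Ioc (0:ℝ) 1)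
    (hy : y ∈ Set.Ioc (0:ℝ) 1) (hy' : y' ∈ Set.Ioc (0:ℝ) 1)
    (hxx : x ≤ x') (hyy : y ≤ y') : CM2 x' y' ≤ CM2 x y :=
  calc CM2 x' y' ≤ CM2 x' y := CM2_anti_right hx' hy hy' hyy
    _ = CM2 y x' := CM2_comm _ _
    _ ≤ CM2 y x := CM2_anti_right hy hx hx' hxx
    _ = CM2 x y := CM2_comm _ _

/-- Any subset sum of a monotone vector is at most the corresponding tail sum. -/
lemma sum_le_tail {d : ℕ} (a : Fin d → ℝ) (ha : Monotone a) (k : ℕ)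
    (B : Finset (Fin d))
    (hc : B.card = (Finset.univ.filter (fun i : Fin d => k ≤ (i:ℕ))).card) :
    ∑ i ∈ B, a i ≤ ∑ i ∈ Finset.univ.filter (fun i : Fin d => k ≤ (i:ℕ)), a i := by
  classical
  set T := Finset.univ.filter (fun i : Fin d => k ≤ (i:ℕ)) with hT
  have hcX : (B \ T).card = (T \ B).card := by
    have h1 := Finset.card_inter_add_card_sdiff B T
    have h2 := Finset.card_inter_add_card_sdiff T B
    rw [Finset.inter_comm] at h2
    omega
  rcases Finset.eq_empty_or_nonempty (B \ T) with hX | hX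
  · have hYc : (T \ B).card = 0 := by rw [← hcX, hX]; simp
    have hY : T \ B = ∅ := Finset.card_eq_zero.mp hYc
    have hBT : B ⊆ T := by
      intro i hi
      by_contra hit
      exact (Finset.notMem_empty i) (hX ▸ Finset.mem_sdiff.mpr ⟨hi, hit⟩)
    have : B = T := Finset.eq_of_subset_of_card_le hBT (le_of_eq hc.symm)
    rw [this]
  · -- pick the threshold a ⟨k, _⟩
    have hYne : (T \ B).Nonempty := by
      rw [← Finset.card_pos] at hX ⊢; omega
    obtain ⟨j, hj⟩ := hYne
    have hjT : j ∈ T := (Finset.mem_sdiff.mp hj).1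
    have hk : k ≤ (j : ℕ) := by simpa [hT] using (Finset.mem_filter.mp hjT).2
    have hkd : k < d := lt_of_le_of_lt hk j.isLt
    set c : ℝ := a ⟨k, hkd⟩ with hcdef
    have hXle : ∀ i ∈ B \ T, a i ≤ c := by
      intro i hi
      have : ¬ (k ≤ (i:ℕ)) := by
        have := (Finset.mem_sdiff.mp hi).2
        simpa [hT] using this
      refine ha ?_
      rw [Fin.le_def]
      simp only []
      omega
    have hYge : ∀ i ∈ T \ B, c ≤ a i := by
      intro i hi
      have hkI : k ≤ (i:ℕ) := by
        have := (Finset.mem_sdiff.mp hi).1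
        simpa [hT] using (Finset.mem_filter.mp this).2
      refine ha ?_
      rw [Fin.le_def]
      simpa using hkI
    have h1 : ∑ i ∈ B \ T, a i ≤ (B \ T).card • c :=
      Finset.sum_le_card_nsmul _ _ _ hXle
    have h2 : (T \ B).card • c ≤ ∑ i ∈ T \ B, a i :=
      Finset.card_nsmul_le_sum _ _ _ hYge
    have e1 : ∑ i ∈ B ∩ T, a i + ∑ i ∈ B \ T, a i = ∑ i ∈ B, a i :=
      Finset.sum_inter_add_sum_sdiff B T a
    have e2 : ∑ i ∈ T ∩ B, a i + ∑ i ∈ T \ B, a i = ∑ i ∈ T, a i :=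
      Finset.sum_inter_add_sum_sdiff T B a
    rw [Finset.inter_comm] at e2
    rw [hcX] at h1
    linarith

/-- Schur concavity of `ν ↦ ∑ ν_i (1 - ln ν_i)^2`: if the probability vector `l`
majorizes `m`, then `∑ l_i (1 - ln l_i)^2 ≤ ∑ m_i (1 - ln m_i)^2`. -/
theorem schur_concave_M2 {d : ℕ} (l m : Fin d → ℝ)
    (hl0 : ∀ i, 0 < l i) (hl1 : ∑ i, l i = 1)
    (hm0 : ∀ i, 0 < m i) (hm1 : ∑ i, m i = 1)
    (hmaj : Majorizes l m) :
    ∑ i, l i * (1 - Real.log (l i)) ^ 2 ≤ ∑ i, m i * (1 - Real.log (m i)) ^ 2 := by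
  classical
  set σ := Tuple.sort l with hσ
  set τ := Tuple.sort m with hτ
  set a : Fin d → ℝ := l ∘ σ with hadef
  set b : Fin d → ℝ := m ∘ τ with hbdef
  have ha_mono : Monotone a := Tuple.monotone_sort l
  have hb_mono : Monotone b := Tuple.monotone_sort m
  -- membership in Ioc 0 1
  have hl_mem : ∀ i, l i ∈ Set.Ioc (0:ℝ) 1 := by
    intro i
    refine ⟨hl0 i, ?_⟩
    calc l i ≤ ∑ j, l j :=
          Finset.single_le_sum (fun j _ => (hl0 j).le) (Finset.mem_univ i)
      _ = 1 := hl1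
  have hm_mem : ∀ i, m i ∈ Set.Ioc (0:ℝ) 1 := by
    intro i
    refine ⟨hm0 i, ?_⟩
    calc m i ≤ ∑ j, m j :=
          Finset.single_le_sum (fun j _ => (hm0 j).le) (Finset.mem_univ i)
      _ = 1 := hm1
  have ha_mem : ∀ i, a i ∈ Set.Ioc (0:ℝ) 1 := fun i => hl_mem (σ i)
  have hb_mem : ∀ i, b i ∈ Set.Ioc (0:ℝ) 1 := fun i => hm_mem (τ i)
  have ha_sum : ∑ i, a i = 1 := by
    rw [hadef]; simpa using (Equiv.sum_comp σ l).trans hl1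
  have hb_sum : ∑ i, b i = 1 := by
    rw [hbdef]; simpa using (Equiv.sum_comp τ m).trans hm1
  -- key partial sums inequality: tails of b dominated by tails of a
  have htail : ∀ k : ℕ,
      ∑ i ∈ Finset.univ.filter (fun i : Fin d => k ≤ (i:ℕ)), b i ≤
      ∑ i ∈ Finset.univ.filter (fun i : Fin d => k ≤ (i:ℕ)), a i := by
    intro k
    set T := Finset.univ.filter (fun i : Fin d => k ≤ (i:ℕ)) with hT
    have e1 : ∑ i ∈ T, b i = ∑ j ∈ T.image τ, m j := by
      rw [Finset.sum_image (fun x _ y _ h => τ.injective h)]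
      rfl
    obtain ⟨B, hBcard, hBle⟩ := hmaj (T.image τ)
    have hTcard : (T.image τ).card = T.card :=
      Finset.card_image_of_injective _ τ.injective
    have e2 : ∑ j ∈ B, l j = ∑ i ∈ B.image σ.symm, a i := by
      rw [Finset.sum_image (fun x _ y _ h => σ.symm.injective h)]
      apply Finset.sum_congr rfl
      intro x _
      simp [hadef]
    have hB'card : (B.image σ.symm).card = T.card := by
      rw [Finset.card_image_of_injective _ σ.symm.injective, hBcard, hTcard]
    calc ∑ i ∈ T, b i = ∑ j ∈ T.image τ, m j := e1
      _ ≤ ∑ j ∈ B, l j := hBle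
      _ = ∑ i ∈ B.image σ.symm, a i := e2
      _ ≤ ∑ i ∈ T, a i := sum_le_tail a ha_mono k _ hB'card
  -- head sums
  have hsplit : ∀ (v : Fin d → ℝ) (k : ℕ),
      ∑ i ∈ Finset.univ.filter (fun i : Fin d => (i:ℕ) < k), v i
      + ∑ i ∈ Finset.univ.filter (fun i : Fin d => k ≤ (i:ℕ)), v i = ∑ i, v i := by
    intro v k
    rw [← Finset.sum_filter_add_sum_filter_not Finset.univ (fun i : Fin d => (i:ℕ) < k) v]
    congr 1
    apply Finset.sum_congr _ (fun _ _ => rfl)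
    apply Finset.filter_congr
    intro i _
    simp [not_lt]
  have hhead : ∀ k : ℕ,
      ∑ i ∈ Finset.univ.filter (fun i : Fin d => (i:ℕ) < k), a i ≤
      ∑ i ∈ Finset.univ.filter (fun i : Fin d => (i:ℕ) < k), b i := by
    intro k
    have h1 := hsplit a k
    have h2 := hsplit b k
    have := htail k
    rw [ha_sum] at h1
    rw [hb_sum] at h2
    linarith
  -- ℕ-indexed versions for Abel summation
  set a' : ℕ → ℝ := fun i => if h : i < d then a ⟨i, h⟩ else 0 with ha'
  set b' : ℕ → ℝ := fun i => if h : i < d then b ⟨i, h⟩ else 0 with hb'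
  set c' : ℕ → ℝ := fun i => if h : i < d then CM2 (a ⟨i, h⟩) (b ⟨i, h⟩) else 0 with hc'
  have hfin : ∀ (v : Fin d → ℝ) (v' : ℕ → ℝ),
      (∀ (i : ℕ) (h : i < d), v' i = v ⟨i, h⟩) →
      ∀ k, k ≤ d → ∑ i ∈ Finset.range k, v' i =
        ∑ i ∈ Finset.univ.filter (fun i : Fin d => (i:ℕ) < k), v i := by
    intro v v' hv k hk
    have hset : (Finset.range d).filter (fun i => i < k) = Finset.range k := by
      ext i
      simp only [Finset.mem_filter, Finset.mem_range]
      omega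
    rw [← hset, Finset.sum_filter,
      ← Fin.sum_univ_eq_sum_range (fun i => if i < k then v' i else 0) d,
      Finset.sum_filter]
    apply Finset.sum_congr rfl
    intro i _
    by_cases h : (i:ℕ) < k <;> simp [h, hv i.val i.isLt]
  -- the difference sequence and its partial sums
  set Gf : ℕ → ℝ := fun i => b' i - a' i with hGf
  have hG_nonneg : ∀ k, k ≤ d → 0 ≤ ∑ i ∈ Finset.range k, Gf i := by
    intro k hk
    have : ∑ i ∈ Finset.range k, Gf i
        = ∑ i ∈ Finset.range k, b' i - ∑ i ∈ Finset.range k, a' i := by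
      rw [hGf, Finset.sum_sub_distrib]
    rw [this, hfin b b' (fun i h => dif_pos h) k hk, hfin a a' (fun i h => dif_pos h) k hk]
    have := hhead k
    linarith
  have hG_d : ∑ i ∈ Finset.range d, Gf i = 0 := by
    have h1 : ∑ i ∈ Finset.range d, a' i = 1 := by
      rw [hfin a a' (fun i h => dif_pos h) d le_rfl]
      rw [← ha_sum]
      apply Finset.sum_congr _ (fun _ _ => rfl)
      ext i
      simp [i.isLt]
    have h2 : ∑ i ∈ Finset.range d, b' i = 1 := by
      rw [hfin b b' (fun i h => dif_pos h) d le_rfl]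
      rw [← hb_sum]
      apply Finset.sum_congr _ (fun _ _ => rfl)
      ext i
      simp [i.isLt]
    rw [hGf, Finset.sum_sub_distrib, h1, h2]
    ring
  -- antitonicity of c' on the relevant range
  have hc_anti : ∀ i : ℕ, i + 1 < d → c' (i + 1) ≤ c' i := by
    intro i hi1
    have hi : i < d := Nat.lt_of_succ_lt hi1
    rw [hc']
    simp only [dif_pos hi1, dif_pos hi]
    apply CM2_anti (ha_mem _) (ha_mem _) (hb_mem _) (hb_mem _)
    · exact ha_mono (by simp [Fin.le_def] : (⟨i, hi⟩ : Fin d) ≤ ⟨i+1, hi1⟩)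
    · exact hb_mono (by simp [Fin.le_def] : (⟨i, hi⟩ : Fin d) ≤ ⟨i+1, hi1⟩)
  -- Abel summation
  have habel := Finset.sum_range_by_parts c' Gf d
  have hkey : 0 ≤ ∑ i ∈ Finset.range d, c' i • Gf i := by
    rw [habel, hG_d, smul_zero, zero_sub, le_neg, neg_zero]
    apply Finset.sum_nonpos
    intro i hi
    rw [Finset.mem_range] at hi
    have hi1 : i + 1 < d := by omega
    have h1 : c' (i + 1) - c' i ≤ 0 := by
      have := hc_anti i hi1
      linarith
    have h2 : 0 ≤ ∑ j ∈ Finset.range (i + 1), Gf j := hG_nonneg (i + 1) (by omega)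
    rw [smul_eq_mul]
    exact mul_nonpos_of_nonpos_of_nonneg h1 h2
  -- identify the sum with the difference of g-sums
  have hdiff : ∑ i ∈ Finset.range d, c' i • Gf i
      = ∑ i : Fin d, (gM2 (b i) - gM2 (a i)) := by
    rw [← Fin.sum_univ_eq_sum_range (fun i => c' i • Gf i) d]
    apply Finset.sum_congr rfl
    intro i _
    rw [hGf, hc', ha', hb']
    simp only [dif_pos i.isLt, smul_eq_mul, Fin.eta]
    rw [← CM2_spec]
  have hmain : ∑ i : Fin d, gM2 (a i) ≤ ∑ i : Fin d, gM2 (b i) := by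
    have : 0 ≤ ∑ i : Fin d, (gM2 (b i) - gM2 (a i)) := hdiff ▸ hkey
    rw [Finset.sum_sub_distrib] at this
    linarith
  -- transfer back through the sorting permutations
  have hla : ∑ i : Fin d, gM2 (l i) = ∑ i : Fin d, gM2 (a i) := by
    rw [hadef]
    exact (Equiv.sum_comp σ (fun j => gM2 (l j))).symm
  have hmb : ∑ i : Fin d, gM2 (m i) = ∑ i : Fin d, gM2 (b i) := by
    rw [hbdef]
    exact (Equiv.sum_comp τ (fun j => gM2 (m j))).symm
  have : ∑ i : Fin d, gM2 (l i) ≤ ∑ i : Fin d, gM2 (m i) := by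
    rw [hla, hmb]; exact hmain
  simpa only [gM2] using this
end

section
/- Let ρ, σ be commuting full-rank density matrices diagonal in a common basis with eigenvalue vectors r, s, and let ρ', σ' be obtained by applying a common row-stochastic matrix T to the eigenvalue vectors: r' = r T, s' = s T. If x F(x) is concave on [0,1], then with s_min the smallest eigenvalue of σ, one has ∑_i r'_i F(ln(s_min r'_i/s'_i)) ≥ ∑_i r_i F(ln(s_min r_i/s_i)). -/
/-- Classical relative monotone theorem: if the pairs of eigenvalue vectors `(r, s)` and
`(r', s')` are related by a common row-stochastic matrix `T` (`r' = r T`, `s' = s T`),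
and `x ↦ x F(ln x)` is concave on `[0,1]`, then with `s_min` the smallest entry of `s`,
`∑ i, r'_i F(ln (s_min r'_i / s'_i)) ≥ ∑ i, r_i F(ln (s_min r_i / s_i))`. -/
theorem relative_monotone_classical {d : ℕ} (r s r' s' : Fin d → ℝ)
    (hr0 : ∀ i, 0 ≤ r i) (hr1 : ∑ i, r i = 1)
    (hs0 : ∀ i, 0 < s i) (hs1 : ∑ i, s i = 1)
    (hr'0 : ∀ i, 0 ≤ r' i) (hr'1 : ∑ i, r' i = 1)
    (hs'0 : ∀ i, 0 < s' i) (hs'1 : ∑ i, s' i = 1)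
    (T : Matrix (Fin d) (Fin d) ℝ)
    (hT0 : ∀ i j, 0 ≤ T i j) (hTrow : ∀ i, ∑ j, T i j = 1)
    (hrT : r' = Matrix.vecMul r T) (hsT : s' = Matrix.vecMul s T)
    (F : ℝ → ℝ) (hF : ConcaveOn ℝ (Set.Icc (0:ℝ) 1) (fun x : ℝ => x * F (Real.log x)))
    (smin : ℝ) (hsminLe : ∀ i, smin ≤ s i) (hsminMem : ∃ i, smin = s i) :
    ∑ i, r' i * F (Real.log (smin * r' i / s' i))
      ≥ ∑ i, r i * F (Real.log (smin * r i / s i)) := by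
  obtain ⟨i0, hi0⟩ := hsminMem
  have hsmin : 0 < smin := hi0 ▸ hs0 i0
  set g : ℝ → ℝ := fun x => x * F (Real.log x) with hg
  have hr_le : ∀ i, r i ≤ 1 := fun i =>
    hr1 ▸ Finset.single_le_sum (fun j _ => hr0 j) (Finset.mem_univ i)
  have hmem : ∀ i, smin * r i / s i ∈ Set.Icc (0:ℝ) 1 := by
    intro i
    have hsi := hs0 i
    constructor
    · have := hr0 i; positivity
    · rw [div_le_one hsi]
      calc smin * r i ≤ s i * 1 :=
            mul_le_mul (hsminLe i) (hr_le i) (hr0 i) (le_of_lt hsi)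
        _ = s i := mul_one _
  have key : ∀ j, ∑ i, (s i * T i j) * g (smin * r i / s i)
      ≤ s' j * g (smin * r' j / s' j) := by
    intro j
    have hsj' := hs'0 j
    have hw0 : ∀ i ∈ Finset.univ, 0 ≤ s i * T i j / s' j := fun i _ => by
      have := hs0 i; have := hT0 i j; positivity
    have hsj : ∑ i, s i * T i j = s' j := by
      rw [hsT]; simp [Matrix.vecMul, dotProduct]
    have hw1 : ∑ i, s i * T i j / s' j = 1 := by
      rw [← Finset.sum_div, hsj, div_self (ne_of_gt hsj')]
    have hjen := hF.le_map_sum hw0 hw1 (fun i _ => hmem i)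
    have hcenter : ∑ i, (s i * T i j / s' j) • (smin * r i / s i)
        = smin * r' j / s' j := by
      rw [hrT]
      simp only [smul_eq_mul, Matrix.vecMul, dotProduct]
      rw [Finset.mul_sum, Finset.sum_div]
      apply Finset.sum_congr rfl
      intro i _
      have hsi := (hs0 i).ne'
      field_simp
    rw [hcenter] at hjen
    calc ∑ i, (s i * T i j) * g (smin * r i / s i)
        = s' j * ∑ i, (s i * T i j / s' j) • g (smin * r i / s i) := by
          rw [Finset.mul_sum]
          apply Finset.sum_congr rfl
          intro i _
          rw [smul_eq_mul]
          field_simp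
      _ ≤ s' j * g (smin * r' j / s' j) :=
          mul_le_mul_of_nonneg_left hjen (le_of_lt hsj')
  have main : ∑ i, s i * g (smin * r i / s i)
      ≤ ∑ j, s' j * g (smin * r' j / s' j) := by
    calc ∑ i, s i * g (smin * r i / s i)
        = ∑ i, ∑ j, (s i * T i j) * g (smin * r i / s i) := by
          apply Finset.sum_congr rfl
          intro i _
          rw [← Finset.sum_mul, ← Finset.mul_sum, hTrow i, mul_one]
      _ = ∑ j, ∑ i, (s i * T i j) * g (smin * r i / s i) := Finset.sum_comm
      _ ≤ ∑ j, s' j * g (smin * r' j / s' j) :=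
          Finset.sum_le_sum fun j _ => key j
  have lhs_eq : ∀ (p q : Fin d → ℝ), (∀ i, 0 < q i) →
      ∑ i, q i * g (smin * p i / q i) = smin * ∑ i, p i * F (Real.log (smin * p i / q i)) := by
    intro p q hq
    rw [Finset.mul_sum]
    apply Finset.sum_congr rfl
    intro i _
    have hqi := (hq i).ne'
    simp only [hg]
    field_simp
  rw [lhs_eq r s hs0, lhs_eq r' s' hs'0] at main
  exact le_of_mul_le_mul_left main hsmin
end
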